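/- Let σ be an element of a right-angled Artin group G(Γ) with minimal syllable number among its conjugates, and suppose its minimal word is w = w_1 x_1^{e_1} x_k^{e_k} w_2 where every syllable of w_1 commutes with x_1 and every syllable of w_2 commutes with x_k. If additionally x_1 and x_k commute with each other and x_1 ≠ x_k as generators, then the first and last syllables of σ are incomparable in the syllable partial order, and (under a homomorphism φ realizing commuting generators on disjoint supports) the assigned subsurfaces X^σ(x_1^{e_1}) and X^σ(x_k^{e_k}) are disjoint, hence distinct. -/

import Mathlib

/-- The commutator relators of a right-angled Artin group on the graph `Γ`. -/
def raagRel {V : Type*} (Γ : SimpleGraph V) : Set (FreeGroup V) :=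
  {r | ∃ u v : V, Γ.Adj u v ∧
    r = FreeGroup.of u * FreeGroup.of v * (FreeGroup.of u)⁻¹ * (FreeGroup.of v)⁻¹}

/-- The right-angled Artin group on the graph `Γ`. -/
abbrev RAAG {V : Type*} (Γ : SimpleGraph V) := PresentedGroup (raagRel Γ)

/-- The generator of `RAAG Γ` corresponding to the vertex `v`. -/
def raagGen {V : Type*} (Γ : SimpleGraph V) (v : V) : RAAG Γ :=
  PresentedGroup.of (rels := raagRel Γ) v

/-- The element of `RAAG Γ` represented by a word in syllable form
`x₁^{e₁} ⋯ x_k^{e_k}`, encoded as a list of (generator, exponent) pairs. -/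
def wordProd {V : Type*} (Γ : SimpleGraph V) (w : List (V × ℤ)) : RAAG Γ :=
  (w.map fun p => (raagGen Γ p.1) ^ p.2).prod

/-- `w` is a word for `σ` with the minimal number of syllables (`w ∈ Min(σ)`). -/
def IsMinWord {V : Type*} (Γ : SimpleGraph V) (σ : RAAG Γ) (w : List (V × ℤ)) : Prop :=
  wordProd Γ w = σ ∧ ∀ w' : List (V × ℤ), wordProd Γ w' = σ → w.length ≤ w'.length

/-- The number of syllables of `σ`: the least number of syllables of a word representing it. -/
noncomputable def sylCount {V : Type*} (Γ : SimpleGraph V) (σ : RAAG Γ) : ℕ :=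
  sInf {k | ∃ w : List (V × ℤ), wordProd Γ w = σ ∧ w.length = k}

/-- Number of earlier occurrences of the syllable at position `i` in `w`. -/
def occCount {V : Type*} [DecidableEq V] [Inhabited V] (w : List (V × ℤ)) (i : ℕ) : ℕ :=
  (w.take i).count (w.getD i default)

/-- Position `i'` of `w'` carries the same syllable (same generator, exponent and
occurrence number) as position `i` of `w`. -/
def sylMatch {V : Type*} [DecidableEq V] [Inhabited V]
    (w w' : List (V × ℤ)) (i i' : ℕ) : Prop :=
  i < w.length ∧ i' < w'.length ∧ w'.getD i' default = w.getD i default ∧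
    occCount w' i' = occCount w i

/-- The syllable partial order on `syl(σ)`: the syllable at position `i` of the minimal
word `w` precedes the one at position `j` in *every* minimal word for `σ`. -/
def sylPrec {V : Type*} [DecidableEq V] [Inhabited V] (Γ : SimpleGraph V) (σ : RAAG Γ)
    (w : List (V × ℤ)) (i j : ℕ) : Prop :=
  ∀ w' : List (V × ℤ), IsMinWord Γ σ w' →
    ∀ i' j' : ℕ, sylMatch w w' i i' → sylMatch w w' j j' → i' < j'

/-- The subsurface assigned to the `m`-th syllable of the word `w`:
`X^w(x_m^{e_m}) = φ(x₁^{e₁}⋯x_{m-1}^{e_{m-1}})(X_{J(m)})`. -/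
def sylSubsurface {V S : Type*} [Inhabited V] (Γ : SimpleGraph V)
    (φ : RAAG Γ →* Equiv.Perm S) (X : V → Set S) (w : List (V × ℤ)) (m : ℕ) : Set S :=
  (φ (wordProd Γ (w.take m))) '' X (w.getD m default).1

section Aux

variable {V : Type*}

lemma raagGen_comm (Γ : SimpleGraph V) {u v : V} (h : Γ.Adj u v) :
    Commute (raagGen Γ u) (raagGen Γ v) := by
  have hr : (FreeGroup.of u * FreeGroup.of v * (FreeGroup.of u)⁻¹ * (FreeGroup.of v)⁻¹ :
      FreeGroup V) ∈ Subgroup.normalClosure (raagRel Γ) :=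
    Subgroup.subset_normalClosure ⟨u, v, h, rfl⟩
  have h1 : (QuotientGroup.mk (FreeGroup.of u * FreeGroup.of v * (FreeGroup.of u)⁻¹ *
      (FreeGroup.of v)⁻¹) : RAAG Γ) = 1 := (QuotientGroup.eq_one_iff _).2 hr
  rw [← commutatorElement_eq_one_iff_commute]
  simp only [raagGen, PresentedGroup.of, commutatorElement_def]
  exact h1

lemma wordProd_append (Γ : SimpleGraph V) (u v : List (V × ℤ)) :
    wordProd Γ (u ++ v) = wordProd Γ u * wordProd Γ v := by
  simp [wordProd]

lemma perm_zpow_fix {S : Type*} (f : Equiv.Perm S) (s : S) (h : f s = s) (n : ℤ) :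
    (f ^ n) s = s := by
  have hn : ∀ m : ℕ, (f ^ m) s = s := by
    intro m
    induction m with
    | zero => simp
    | succ k ih => simp [pow_succ, ih, h]
  cases n with
  | ofNat m => simpa using hn m
  | negSucc m =>
      have h1 : (f ^ (m + 1)) s = s := hn (m + 1)
      rw [zpow_negSucc]
      calc (f ^ (m + 1))⁻¹ s = (f ^ (m + 1))⁻¹ ((f ^ (m + 1)) s) := by rw [h1]
        _ = s := Equiv.symm_apply_apply _ _

end Aux

/-- If `σ` (minimal syllable count among its conjugates) has minimal word
`w₁ x₁^{e₁} x_k^{e_k} w₂` with every syllable of `w₁` commuting with `x₁`, every syllable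
of `w₂` commuting with `x_k`, and `x₁, x_k` distinct commuting generators, then the two
middle syllables are incomparable in the syllable partial order and their assigned
subsurfaces are disjoint, hence distinct (when supports are nonempty). -/
theorem incomparable_syllables_disjoint_subsurfaces {V S : Type*} [DecidableEq V] [Inhabited V]
    (Γ : SimpleGraph V) (φ : RAAG Γ →* Equiv.Perm S) (X : V → Set S)
    (hsupp : ∀ (v : V) (s : S), s ∉ X v → φ (raagGen Γ v) s = s)
    (hdisj : ∀ u v : V, Γ.Adj u v → X u ∩ X v = ∅)
    (σ : RAAG Γ) (w₁ w₂ : List (V × ℤ)) (a b : V × ℤ)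
    (hmin : IsMinWord Γ σ (w₁ ++ a :: b :: w₂))
    (hconj : ∀ g : RAAG Γ, sylCount Γ σ ≤ sylCount Γ (g * σ * g⁻¹))
    (hw₁ : ∀ p ∈ w₁, Prod.fst p = a.1 ∨ Γ.Adj (Prod.fst p) a.1)
    (hw₂ : ∀ p ∈ w₂, Prod.fst p = b.1 ∨ Γ.Adj (Prod.fst p) b.1)
    (hab : Γ.Adj a.1 b.1) (hne : a.1 ≠ b.1) :
    ¬ sylPrec Γ σ (w₁ ++ a :: b :: w₂) w₁.length (w₁.length + 1) ∧
    ¬ sylPrec Γ σ (w₁ ++ a :: b :: w₂) (w₁.length + 1) w₁.length ∧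
    sylSubsurface Γ φ X (w₁ ++ a :: b :: w₂) w₁.length ∩
      sylSubsurface Γ φ X (w₁ ++ a :: b :: w₂) (w₁.length + 1) = ∅ ∧
    ((∀ v : V, (X v).Nonempty) →
      sylSubsurface Γ φ X (w₁ ++ a :: b :: w₂) w₁.length ≠
        sylSubsurface Γ φ X (w₁ ++ a :: b :: w₂) (w₁.length + 1)) := by
  set w : List (V × ℤ) := w₁ ++ a :: b :: w₂ with hw
  set w' : List (V × ℤ) := w₁ ++ b :: a :: w₂ with hw'
  set n := w₁.length with hn
  have hab' : a ≠ b := fun h => hne (congrArg Prod.fst h)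
  have hcomm : Commute (raagGen Γ a.1) (raagGen Γ b.1) := raagGen_comm Γ hab
  -- products agree
  have hswap : wordProd Γ w' = wordProd Γ w := by
    simp only [hw, hw', wordProd, List.map_append, List.prod_append, List.map_cons,
      List.prod_cons]
    congr 1
    rw [← mul_assoc, ← mul_assoc, (hcomm.zpow_zpow a.2 b.2).eq]
  have hmin' : IsMinWord Γ σ w' := by
    refine ⟨hswap.trans hmin.1, fun u hu => ?_⟩
    have := hmin.2 u hu
    simpa [hw, hw'] using this
  -- getD facts
  have gwa : w.getD n default = a := by
    simp [hw, hn, List.getD_eq_getElem?_getD, List.getElem?_append_right,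
      List.getElem_append_right]
  have gwb : w.getD (n + 1) default = b := by
    simp [hw, hn, List.getD_eq_getElem?_getD, List.getElem?_append_right,
      List.getElem_append_right]
  have gw'b : w'.getD n default = b := by
    simp [hw', hn, List.getD_eq_getElem?_getD, List.getElem?_append_right,
      List.getElem_append_right]
  have gw'a : w'.getD (n + 1) default = a := by
    simp [hw', hn, List.getD_eq_getElem?_getD, List.getElem?_append_right,
      List.getElem_append_right]
  -- take facts
  have twn : w.take n = w₁ := by simp [hw, hn, List.take_left]
  have twn1 : w.take (n + 1) = w₁ ++ [a] := by
    simp [hw, hn, List.take_append]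
  have tw'n : w'.take n = w₁ := by simp [hw', hn, List.take_left]
  have tw'n1 : w'.take (n + 1) = w₁ ++ [b] := by
    simp [hw', hn, List.take_append]
  -- lengths
  have hlen : n + 1 < w.length := by simp [hw, hn]
  have hlen' : n + 1 < w'.length := by simp [hw', hn]
  -- occurrence counts
  have oa : occCount w n = w₁.count a := by
    rw [occCount, gwa, twn]
  have ob : occCount w (n + 1) = w₁.count b := by
    rw [occCount, gwb, twn1]
    simp [List.count_append, List.count_cons, hab', hab'.symm]
  have o'b : occCount w' n = w₁.count b := by
    rw [occCount, gw'b, tw'n]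
  have o'a : occCount w' (n + 1) = w₁.count a := by
    rw [occCount, gw'a, tw'n1]
    simp [List.count_append, List.count_cons, hab', hab'.symm]
  -- syllable matches
  have ma : sylMatch w w' n (n + 1) :=
    ⟨lt_trans (Nat.lt_succ_self n) hlen, hlen', gw'a.trans gwa.symm, o'a.trans oa.symm⟩
  have mb : sylMatch w w' (n + 1) n :=
    ⟨hlen, lt_trans (Nat.lt_succ_self n) hlen', gw'b.trans gwb.symm, o'b.trans ob.symm⟩
  have maa : sylMatch w w n n :=
    ⟨lt_trans (Nat.lt_succ_self n) hlen, lt_trans (Nat.lt_succ_self n) hlen, rfl, rfl⟩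
  have mbb : sylMatch w w (n + 1) (n + 1) := ⟨hlen, hlen, rfl, rfl⟩
  have hXab : X a.1 ∩ X b.1 = ∅ := hdisj a.1 b.1 hab
  have hkey : sylSubsurface Γ φ X w n ∩ sylSubsurface Γ φ X w (n + 1) = ∅ := by
    have hfix : (φ (raagGen Γ a.1 ^ a.2)) '' X b.1 = X b.1 := by
      have hf : ∀ s ∈ X b.1, φ (raagGen Γ a.1 ^ a.2) s = s := by
        intro s hs
        have hsn : s ∉ X a.1 := fun h => Set.eq_empty_iff_forall_notMem.1 hXab s ⟨h, hs⟩
        rw [map_zpow]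
        exact perm_zpow_fix _ _ (hsupp a.1 s hsn) _
      ext t
      constructor
      · rintro ⟨s, hs, rfl⟩; rwa [hf s hs]
      · intro ht; exact ⟨t, ht, hf t ht⟩
    have e1 : sylSubsurface Γ φ X w n = φ (wordProd Γ w₁) '' X a.1 := by
      rw [sylSubsurface, twn, gwa]
    have e2 : sylSubsurface Γ φ X w (n + 1) = φ (wordProd Γ w₁) '' X b.1 := by
      rw [sylSubsurface, twn1, gwb, wordProd_append, map_mul]
      have : wordProd Γ [b] = raagGen Γ b.1 ^ b.2 := by simp [wordProd]
      have hcomp : ∀ Y : Set S, (φ (wordProd Γ w₁) * φ (wordProd Γ [a])) '' Y =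
          φ (wordProd Γ w₁) '' (φ (wordProd Γ [a]) '' Y) := by
        intro Y
        rw [← Set.image_comp]
        rfl
      rw [hcomp]
      have : wordProd Γ [a] = raagGen Γ a.1 ^ a.2 := by simp [wordProd]
      rw [this, hfix]
    rw [e1, e2, ← Set.image_inter (Equiv.injective _), hXab, Set.image_empty]
  refine ⟨?_, ?_, hkey, ?_⟩
  · intro hp
    exact absurd (hp w' hmin' (n + 1) n ma mb) (by omega)
  · intro hp
    exact absurd (hp w hmin (n + 1) n mbb maa) (by omega)
  · intro hX heq
    have h1 : (sylSubsurface Γ φ X w n).Nonempty := by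
      rw [sylSubsurface, twn, gwa]
      exact (hX a.1).image _
    rw [heq, Set.inter_self] at hkey
    rw [heq] at h1
    exact h1.ne_empty hkey
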